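/- Let (X, X̃) be a Cauchy pair on V. Then there exists a nonzero bilinear form ⟨·,·⟩ on V such that ⟨Xu, v⟩ = ⟨u, Xv⟩ and ⟨X̃u, v⟩ = ⟨u, X̃v⟩ for all u, v ∈ V; moreover, this form is unique up to multiplication by a nonzero scalar of K. -/

import Mathlib

section CauchyAux

variable {K V : Type*} [Field K] [AddCommGroup V] [Module K V]

/-- Auxiliary key lemma: given an eigenbasis of `X` with pairwise distinct eigenvalues,
a rank-one decomposition `Xt = X - f ⊗ w` with `f` nonvanishing on the basis and all
coordinates of `w` nonzero, the invariant form exists and is unique up to scalar. -/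
theorem cauchy_key {X Xt : Module.End K V} {ι : Type*} [Fintype ι]
    (b : Module.Basis ι K V) (ev : ι → K)
    (hXb : ∀ i, X (b i) = ev i • b i)
    (hμne : ∀ i j : ι, i ≠ j → ev i ≠ ev j)
    {w : V} {f : V →ₗ[K] K}
    (hwne : w ≠ 0) (hfne : f ≠ 0)
    (hXtv : ∀ v, Xt v = X v - f v • w)
    (hfb : ∀ i, f (b i) ≠ 0)
    (hane : ∀ i, b.repr w i ≠ 0) :
    ∃ B : V →ₗ[K] V →ₗ[K] K, B ≠ 0 ∧
      (∀ u v : V, B (X u) v = B u (X v)) ∧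
      (∀ u v : V, B (Xt u) v = B u (Xt v)) ∧
      ∀ B' : V →ₗ[K] V →ₗ[K] K, B' ≠ 0 →
        (∀ u v : V, B' (X u) v = B' u (X v)) →
        (∀ u v : V, B' (Xt u) v = B' u (Xt v)) →
        ∃ c : K, c ≠ 0 ∧ B' = c • B := by
  classical
  have hne : Nonempty ι := by
    by_contra hemp
    rw [not_nonempty_iff] at hemp
    haveI : Subsingleton V := b.repr.toEquiv.subsingleton
    exact hwne (Subsingleton.elim _ _)
  obtain ⟨i₀⟩ := hne
  -- diagonal action on coordinates
  have hXdiag : ∀ (u : V) (i : ι), b.repr (X u) i = ev i * b.repr u i := by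
    intro u i
    conv_lhs => rw [← b.sum_repr u]
    rw [map_sum]
    simp only [map_smul, hXb]
    rw [map_sum]
    simp only [map_smul, Module.Basis.repr_self, Finsupp.smul_apply,
      Finsupp.single_apply, smul_eq_mul]
    rw [Finsupp.finset_sum_apply]
    rw [Finset.sum_eq_single i]
    · simp [mul_comm]
    · intro j _ hj
      simp [Finsupp.smul_apply, Finsupp.single_apply, hj]
    · intro hi
      simp at hi
  have hXtdiag : ∀ (u : V) (i : ι),
      b.repr (Xt u) i = ev i * b.repr u i - f u * b.repr w i := by
    intro u i
    rw [hXtv u, map_sub, map_smul, Finsupp.sub_apply, Finsupp.smul_apply, hXdiag, smul_eq_mul]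
  -- the bilinear form
  set c : ι → K := fun i => f (b i) / b.repr w i with hc
  have hcne : ∀ i, c i ≠ 0 := fun i => div_ne_zero (hfb i) (hane i)
  set B : V →ₗ[K] V →ₗ[K] K :=
    ∑ i : ι, LinearMap.smulRight (c i • b.coord i) (b.coord i) with hB
  have hBapp : ∀ u v : V, B u v = ∑ i : ι, c i * b.repr u i * b.repr v i := by
    intro u v
    rw [hB]
    simp [LinearMap.sum_apply, LinearMap.smulRight_apply, Module.Basis.coord_apply, mul_assoc]
  have hfsum : ∀ v : V, ∑ i : ι, f (b i) * b.repr v i = f v := by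
    intro v
    conv_rhs => rw [← b.sum_repr v]
    rw [map_sum]
    simp [mul_comm]
  have hcw : ∀ i, c i * b.repr w i = f (b i) := by
    intro i
    rw [hc]
    exact div_mul_cancel₀ _ (hane i)
  have hBw : ∀ v, B w v = f v := by
    intro v
    rw [hBapp, ← hfsum v]
    refine Finset.sum_congr rfl fun i _ => ?_
    rw [← hcw i]
  have hBw' : ∀ u, B u w = f u := by
    intro u
    rw [hBapp, ← hfsum u]
    refine Finset.sum_congr rfl fun i _ => ?_
    rw [← hcw i]
    ring
  have hBXsym : ∀ u v : V, B (X u) v = B u (X v) := by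
    intro u v
    rw [hBapp, hBapp]
    refine Finset.sum_congr rfl fun i _ => ?_
    rw [hXdiag, hXdiag]
    ring
  have hBXtsym : ∀ u v : V, B (Xt u) v = B u (Xt v) := by
    intro u v
    have h1 : B (Xt u) v = B (X u) v - f u * B w v := by
      rw [hXtv u, map_sub, map_smul]
      simp
    have h2 : B u (Xt v) = B u (X v) - f v * B u w := by
      rw [hXtv v, map_sub, map_smul]
      simp
    rw [h1, h2, hBw, hBw', hBXsym, mul_comm]
  have hBne : B ≠ 0 := by
    intro h0
    obtain ⟨v, hv⟩ := DFunLike.ne_iff.mp hfne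
    have := hBw v
    rw [h0] at this
    simp at this
    exact hv this.symm
  -- uniqueness
  refine ⟨B, hBne, hBXsym, hBXtsym, ?_⟩
  intro B' hB'ne hB'X hB'Xt
  have hBbb : ∀ i j : ι, B (b i) (b j) = if i = j then c i else 0 := by
    intro i j
    rw [hBapp]
    rw [Finset.sum_eq_single i]
    · simp only [Module.Basis.repr_self, Finsupp.single_apply]
      by_cases hij : i = j
      · subst hij; simp
      · rw [if_neg (fun hh : j = i => hij hh.symm), if_neg hij]
        simp
    · intro k _ hk
      simp only [Module.Basis.repr_self, Finsupp.single_apply]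
      rw [if_neg (fun hh : i = k => hk hh.symm)]
      simp
    · intro hi; simp at hi
  have hdiag' : ∀ i j : ι, i ≠ j → B' (b i) (b j) = 0 := by
    intro i j hij
    have := hB'X (b i) (b j)
    rw [hXb, hXb, map_smul] at this
    simp only [LinearMap.smul_apply, map_smul, smul_eq_mul] at this
    have hsub : (ev i - ev j) * B' (b i) (b j) = 0 := by
      rw [sub_mul, this]; ring
    rcases mul_eq_zero.mp hsub with h | h
    · exact absurd (sub_eq_zero.mp h) (hμne i j hij)
    · exact h
  set d : ι → K := fun i => B' (b i) (b i) with hd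
  have hB'w : ∀ j : ι, B' w (b j) = b.repr w j * d j := by
    intro j
    conv_lhs => rw [← b.sum_repr w, map_sum]
    simp only [LinearMap.sum_apply, map_smul, LinearMap.smul_apply, smul_eq_mul]
    rw [Finset.sum_eq_single j]
    · intro k _ hk
      rw [hdiag' k j hk, mul_zero]
    · intro hj; simp at hj
  have hB'w' : ∀ i : ι, B' (b i) w = b.repr w i * d i := by
    intro i
    conv_lhs => rw [← b.sum_repr w, map_sum]
    simp only [map_smul, smul_eq_mul]
    rw [Finset.sum_eq_single i]
    · intro k _ hk
      rw [hdiag' i k (fun hh => hk hh.symm), mul_zero]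
    · intro hj; simp at hj
  have hrel : ∀ i j : ι, f (b i) * (b.repr w j * d j) = f (b j) * (b.repr w i * d i) := by
    intro i j
    by_cases hij : i = j
    · subst hij; rfl
    · have hh := hB'Xt (b i) (b j)
      rw [hXtv (b i), hXtv (b j), hXb i, hXb j] at hh
      simp only [map_sub, map_smul, LinearMap.sub_apply, LinearMap.smul_apply,
        smul_eq_mul] at hh
      rw [hdiag' i j hij, hB'w j, hB'w' i] at hh
      linear_combination -hh
  -- pick the scalar
  have hd0 : d i₀ ≠ 0 := by
    intro h0
    apply hB'ne
    have hdall : ∀ j, d j = 0 := by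
      intro j
      have := hrel i₀ j
      rw [h0, mul_zero, mul_zero] at this
      rcases mul_eq_zero.mp this with h | h
      · exact absurd h (hfb i₀)
      · rcases mul_eq_zero.mp h with h' | h'
        · exact absurd h' (hane j)
        · exact h'
    apply b.ext
    intro i
    apply b.ext
    intro j
    by_cases hij : i = j
    · subst hij
      simpa using hdall i
    · simpa using hdiag' i j hij
  refine ⟨d i₀ / c i₀, div_ne_zero hd0 (hcne i₀), ?_⟩
  apply b.ext
  intro i
  apply b.ext
  intro j
  rw [LinearMap.smul_apply, LinearMap.smul_apply, smul_eq_mul, hBbb]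
  by_cases hij : i = j
  · subst hij
    rw [if_pos rfl]
    show d i = d i₀ / (f (b i₀) / b.repr w i₀) * (f (b i) / b.repr w i)
    have hr := hrel i i₀
    have h1 := hfb i₀
    have h2 := hane i
    have h3 := hane i₀
    have h4 := hfb i
    field_simp
    linear_combination -hr
  · rw [if_neg hij, mul_zero]
    exact hdiag' i j hij

end CauchyAux

def IsCauchyPair (K V : Type*) [Field K] [AddCommGroup V] [Module K V]
    (X Xt : Module.End K V) : Prop :=
  (⨆ μ : K, X.eigenspace μ) = ⊤ ∧
  (⨆ μ : K, Xt.eigenspace μ) = ⊤ ∧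
  Module.rank K (LinearMap.range (X - Xt)) = 1 ∧
  ∀ W : Submodule K V, W.map (X : V →ₗ[K] V) ≤ W → W.map (Xt : V →ₗ[K] V) ≤ W →
    W = ⊥ ∨ W = ⊤

theorem stmt16 {K V : Type*} [Field K] [AddCommGroup V] [Module K V] [FiniteDimensional K V]
    {X Xt : Module.End K V} (h : IsCauchyPair K V X Xt) :
    ∃ B : V →ₗ[K] V →ₗ[K] K, B ≠ 0 ∧
      (∀ u v : V, B (X u) v = B u (X v)) ∧
      (∀ u v : V, B (Xt u) v = B u (Xt v)) ∧
      ∀ B' : V →ₗ[K] V →ₗ[K] K, B' ≠ 0 →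
        (∀ u v : V, B' (X u) v = B' u (X v)) →
        (∀ u v : V, B' (Xt u) v = B' u (Xt v)) →
        ∃ c : K, c ≠ 0 ∧ B' = c • B := by
  classical
  obtain ⟨hX, hXtd, hrk, hirr⟩ := h
  -- Step 1 : rank-one decomposition  X - Xt = f ⊗ w
  obtain ⟨w₀, hw₀ne, hw₀⟩ := rank_eq_one_iff.mp hrk
  set w : V := (w₀ : V) with hwdef
  have hwne : w ≠ 0 := fun h0 => hw₀ne (Subtype.ext h0)
  have hex : ∀ v : V, ∃ r : K, r • w = X v - Xt v := by
    intro v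
    obtain ⟨r, hr⟩ := hw₀ ⟨X v - Xt v, ⟨v, rfl⟩⟩
    exact ⟨r, congrArg Subtype.val hr⟩
  choose f₀ hf₀ using hex
  have huniq : ∀ (r : K) (v : V), r • w = X v - Xt v → r = f₀ v := fun r v hr =>
    smul_left_injective K hwne (hr.trans (hf₀ v).symm)
  set f : V →ₗ[K] K :=
    { toFun := f₀
      map_add' := fun u v =>
        (huniq (f₀ u + f₀ v) (u + v) (by rw [add_smul, hf₀, hf₀, map_add, map_add]; abel)).symm
      map_smul' := fun c v =>
        (huniq (c • f₀ v) (c • v)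
          (by rw [smul_eq_mul, mul_smul, hf₀, map_smul, map_smul, smul_sub])).symm } with hfdef
  have hfw : ∀ v, X v - Xt v = f v • w := fun v => (hf₀ v).symm
  have hXtv : ∀ v, Xt v = X v - f v • w := by
    intro v; have := hfw v; rw [← this]; abel
  have hfne : f ≠ 0 := by
    intro h0
    have hz : ∀ v, X v - Xt v = 0 := by
      intro v
      rw [hfw v]
      have : f v = 0 := by rw [h0]; rfl
      rw [this, zero_smul]
    have hr : LinearMap.range (X - Xt) = ⊥ := by
      rw [LinearMap.range_eq_bot]
      ext v; exact hz v
    rw [hr] at hrk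
    simp at hrk
  -- Step 2 : f does not vanish on nonzero eigenvectors of X
  have hfeig : ∀ (μ : K) (v : V), v ∈ X.eigenspace μ → f v = 0 → v = 0 := by
    set U : Submodule K V := ⨆ μ : K, (X.eigenspace μ ⊓ LinearMap.ker f) with hU
    have hsub : ∀ μ : K, (X.eigenspace μ ⊓ LinearMap.ker f).map (X : V →ₗ[K] V)
        ≤ X.eigenspace μ ⊓ LinearMap.ker f := by
      intro μ x hx
      obtain ⟨v, hv, rfl⟩ := Submodule.mem_map.mp hx
      obtain ⟨hv1, hv2⟩ := Submodule.mem_inf.mp hv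
      rw [Module.End.mem_eigenspace_iff] at hv1
      rw [LinearMap.mem_ker] at hv2
      rw [Submodule.mem_inf]
      constructor
      · rw [Module.End.mem_eigenspace_iff, hv1, map_smul, hv1]
      · rw [LinearMap.mem_ker, hv1, map_smul, hv2, smul_zero]
    have hmapX : U.map (X : V →ₗ[K] V) ≤ U := by
      rw [hU, Submodule.map_iSup]
      exact iSup_le fun μ => le_trans (hsub μ)
        (le_iSup (fun μ => X.eigenspace μ ⊓ LinearMap.ker f) μ)
    have hmapXt : U.map (Xt : V →ₗ[K] V) ≤ U := by
      rw [hU, Submodule.map_iSup]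
      refine iSup_le fun μ => ?_
      have heq : (X.eigenspace μ ⊓ LinearMap.ker f).map (Xt : V →ₗ[K] V)
          = (X.eigenspace μ ⊓ LinearMap.ker f).map (X : V →ₗ[K] V) := by
        apply le_antisymm
        · intro x hx
          obtain ⟨v, hv, rfl⟩ := Submodule.mem_map.mp hx
          have hv2 : f v = 0 := LinearMap.mem_ker.mp hv.2
          refine Submodule.mem_map.mpr ⟨v, hv, ?_⟩
          rw [hXtv, hv2, zero_smul, sub_zero]
        · intro x hx
          obtain ⟨v, hv, rfl⟩ := Submodule.mem_map.mp hx
          have hv2 : f v = 0 := LinearMap.mem_ker.mp hv.2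
          refine Submodule.mem_map.mpr ⟨v, hv, ?_⟩
          rw [hXtv, hv2, zero_smul, sub_zero]
      rw [heq]
      exact le_trans (hsub μ)
        (le_iSup (fun μ => X.eigenspace μ ⊓ LinearMap.ker f) μ)
    have hUbot : U = ⊥ := by
      rcases hirr U hmapX hmapXt with h | h
      · exact h
      · exfalso
        have : U ≤ LinearMap.ker f := iSup_le fun μ => inf_le_right
        rw [h, top_le_iff, LinearMap.ker_eq_top] at this
        exact hfne this
    intro μ v hv hfv
    have : v ∈ U := le_iSup (fun μ => X.eigenspace μ ⊓ LinearMap.ker f) μ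
      ⟨hv, LinearMap.mem_ker.mpr hfv⟩
    rw [hUbot] at this
    exact this
  -- Step 3 : an eigenbasis of X
  have hint : DirectSum.IsInternal (X.eigenspace) :=
    (DirectSum.isInternal_submodule_iff_iSupIndep_and_iSup_eq_top _).mpr
      ⟨X.eigenspaces_iSupIndep, hX⟩
  let bs : ∀ μ : K, Module.Basis (Module.Basis.ofVectorSpaceIndex K (X.eigenspace μ)) K (X.eigenspace μ) :=
    fun μ => Module.Basis.ofVectorSpace K _
  let b := hint.collectedBasis bs
  haveI : Fintype (Σ μ : K, Module.Basis.ofVectorSpaceIndex K (X.eigenspace μ)) :=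
    FiniteDimensional.fintypeBasisIndex b
  have hmem : ∀ i, b i ∈ X.eigenspace i.1 := fun i => hint.collectedBasis_mem bs i
  have hXb : ∀ i, X (b i) = i.1 • b i := fun i =>
    Module.End.mem_eigenspace_iff.mp (hmem i)
  have hfb : ∀ i, f (b i) ≠ 0 := fun i hf0 => b.ne_zero i (hfeig i.1 (b i) (hmem i) hf0)
  -- distinct eigenvalues on the basis
  have hμne : ∀ i j : (Σ μ : K, Module.Basis.ofVectorSpaceIndex K (X.eigenspace μ)), i ≠ j → (i.1 : K) ≠ j.1 := by
    intro i j hij hμ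
    have hj' : b j ∈ X.eigenspace i.1 := by rw [hμ]; exact hmem j
    have hvmem : f (b j) • b i - f (b i) • b j ∈ X.eigenspace i.1 :=
      Submodule.sub_mem _ (Submodule.smul_mem _ _ (hmem i)) (Submodule.smul_mem _ _ hj')
    have hfv : f (f (b j) • b i - f (b i) • b j) = 0 := by
      rw [map_sub, map_smul, map_smul, smul_eq_mul, smul_eq_mul, mul_comm]
      ring
    have h0 := hfeig i.1 _ hvmem hfv
    apply hfb j
    have h1 : f (b j) = b.repr (f (b j) • b i - f (b i) • b j) i := by
      simp [Finsupp.single_apply, Ne.symm hij]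
    rw [h1, h0, map_zero, Finsupp.coe_zero]
    rfl
  -- all coordinates of w are nonzero
  have hane : ∀ i, b.repr w i ≠ 0 := by
    intro i hi
    set s : Set V := {v | ∃ j, b.repr w j ≠ 0 ∧ v = b j} with hs
    set W : Submodule K V := Submodule.span K s with hWdef
    have hwW : w ∈ W := by
      have hsum : (∑ j, b.repr w j • b j) ∈ W := by
        refine Submodule.sum_mem _ fun j _ => ?_
        by_cases hj : b.repr w j = 0
        · rw [hj, zero_smul]; exact Submodule.zero_mem _
        · exact Submodule.smul_mem _ _ (Submodule.subset_span ⟨j, hj, rfl⟩)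
      rwa [b.sum_repr w] at hsum
    have hmapX : W.map (X : V →ₗ[K] V) ≤ W := by
      rw [hWdef, Submodule.map_span_le]
      rintro v ⟨j, hj, rfl⟩
      rw [hXb]
      exact Submodule.smul_mem _ _ (Submodule.subset_span ⟨j, hj, rfl⟩)
    have hmapXt : W.map (Xt : V →ₗ[K] V) ≤ W := by
      rw [hWdef, Submodule.map_span_le]
      rintro v ⟨j, hj, rfl⟩
      rw [hXtv]
      refine Submodule.sub_mem _ ?_ (Submodule.smul_mem _ _ hwW)
      rw [hXb]
      exact Submodule.smul_mem _ _ (Submodule.subset_span ⟨j, hj, rfl⟩)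
    have hWtop : W = ⊤ := by
      rcases hirr W hmapX hmapXt with h | h
      · exfalso; rw [h] at hwW; exact hwne hwW
      · exact h
    have hker : W ≤ LinearMap.ker (b.coord i) := by
      rw [hWdef, Submodule.span_le]
      rintro v ⟨j, hj, rfl⟩
      have hji : j ≠ i := fun hh => hj (hh ▸ hi)
      simp [Module.Basis.coord_apply, Module.Basis.repr_self, Finsupp.single_apply, hji]
    have hcoord : b.coord i (b i) = 0 := hker (hWtop ▸ Submodule.mem_top)
    rw [Module.Basis.coord_apply, Module.Basis.repr_self] at hcoord
    simp at hcoord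
  exact cauchy_key b (fun i => i.1) hXb hμne hwne hfne hXtv hfb hane
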